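/- arXiv:1412.6958 — 2 statements merged into one kernel-verified Lean document; each statement's English description precedes it below -/
import Mathlib

section
/- Let (G,p) be a framework with G a triangulated Laman graph and p ∈ P_G. Then the independent partition for (G,p) does not depend on the choice of Henneberg sequence of G: any two Henneberg sequences of G produce the same partition of the edge set E by the recursive construction. -/
open scoped BigOperators

noncomputable section

/-- Points in the Euclidean plane. -/
abbrev Pt : Type := EuclideanSpace ℝ (Fin 2)

/-- The flattened space of planar configurations indexed by `ι`
(two real coordinates for each vertex). -/
abbrev Conf (ι : Type*) : Type _ := EuclideanSpace ℝ (ι × Fin 2)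

/-- The position of agent `i` in the configuration `p`. -/
def pt {ι : Type*} (p : Conf ι) (i : ι) : Pt := WithLp.toLp 2 (fun c => p (i, c))

/-- The sub-configuration of `p` on the vertices in `S`. -/
def restr {ι : Type*} (S : Set ι) (p : Conf ι) : Conf ↥S := WithLp.toLp 2 (fun ic : ↥S × Fin 2 => p ((ic.1 : ι), ic.2))

/-- The configuration space `P_G`: embeddings of the vertex set in the plane for which
adjacent vertices have distinct positions. -/
def configSpace {ι : Type*} (G : SimpleGraph ι) : Set (Conf ι) :=
  {p | ∀ i j : ι, G.Adj i j → pt p i ≠ pt p j}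

/-- A Henneberg sequence for a triangulated Laman graph `G`, encoded by the order
`ord` in which the vertices appear, and for every step `l ≥ 2` the two earlier steps
`par1 l`, `par2 l`, whose (adjacent) vertices the new vertex `ord l` is joined to.
The edges of `G` are exactly the initial edge together with the edges created at
each step. -/
structure Henneberg {ι : Type*} (G : SimpleGraph ι) : Type _ where
  two_le : 2 ≤ Nat.card ι
  ord : Fin (Nat.card ι) ≃ ι
  par1 : Fin (Nat.card ι) → Fin (Nat.card ι)
  par2 : Fin (Nat.card ι) → Fin (Nat.card ι)
  par1_lt : ∀ l : Fin (Nat.card ι), 2 ≤ (l : ℕ) → par1 l < l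
  par2_lt : ∀ l : Fin (Nat.card ι), 2 ≤ (l : ℕ) → par2 l < l
  par_ne : ∀ l : Fin (Nat.card ι), 2 ≤ (l : ℕ) → par1 l ≠ par2 l
  par_adj : ∀ l : Fin (Nat.card ι), 2 ≤ (l : ℕ) → G.Adj (ord (par1 l)) (ord (par2 l))
  edge_iff : ∀ i j : ι, G.Adj i j ↔
    (s(i, j) = s(ord ⟨0, by omega⟩, ord ⟨1, by omega⟩) ∨
      ∃ l : Fin (Nat.card ι), 2 ≤ (l : ℕ) ∧
        (s(i, j) = s(ord (par1 l), ord l) ∨ s(i, j) = s(ord (par2 l), ord l)))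

/-- A graph is a triangulated Laman graph if it is (essentially) a single vertex, or
it can be built by a Henneberg sequence in which each new vertex is joined to the two
endpoints of an existing edge. -/
def IsTriangulatedLaman {ι : Type*} (G : SimpleGraph ι) : Prop :=
  Nat.card ι ≤ 1 ∨ Nonempty (Henneberg G)

open Classical in
/-- The potential `Φ` induced by `G`, with control laws `f i j = u_{ij}(⬝, d̄_{ij})`:
`Φ(p) = Σ_{(i,j) ∈ E} ∫_1^{‖x_i - x_j‖} s u_{ij}(s, d̄_{ij}) ds`
(each edge is counted once; the double sum counts it twice, whence the factor 1/2). -/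
def potential {ι : Type*} [Fintype ι] (G : SimpleGraph ι) (f : ι → ι → ℝ → ℝ)
    (p : Conf ι) : ℝ :=
  (1 / 2) * ∑ i : ι, ∑ j : ι,
    if G.Adj i j then ∫ s in (1 : ℝ)..(dist (pt p i) (pt p j)), s * f i j s else 0

open Classical in
/-- The right-hand side of the formation control system
`ẋ_i = Σ_{j ∈ N_i} u_{ij}(‖x_i - x_j‖, d̄_{ij}) (x_j - x_i)`. -/
def formationField {ι : Type*} [Fintype ι] (G : SimpleGraph ι) (f : ι → ι → ℝ → ℝ)
    (p : Conf ι) : Conf ι :=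
  WithLp.toLp 2 (fun ic : ι × Fin 2 => ∑ j : ι,
    if G.Adj ic.1 j then f ic.1 j (dist (pt p ic.1) (pt p j)) * (p (j, ic.2) - p (ic.1, ic.2))
    else 0)

/-- A monotone attraction/repulsion function: `f` is C¹ on `ℝ_{>0}`,
`d(x f(x))/dx > 0` for `x > 0`, `f` has a unique (positive) zero, and
`∫_x^1 s f(s) ds → -∞` as `x → 0⁺`. -/
structure IsMonoAttRep (f : ℝ → ℝ) : Prop where
  contDiff : ContDiffOn ℝ 1 f (Set.Ioi 0)
  deriv_pos : ∀ x : ℝ, 0 < x → 0 < deriv (fun y => y * f y) x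
  unique_zero : ∃! x : ℝ, 0 < x ∧ f x = 0
  collision : Filter.Tendsto (fun x : ℝ => ∫ s in x..(1 : ℝ), s * f s)
    (nhdsWithin 0 (Set.Ioi 0)) Filter.atBot

/-- 2×2 rotation matrices. -/
def IsRotation (θ : Matrix (Fin 2) (Fin 2) ℝ) : Prop := θ * θ.transpose = 1 ∧ θ.det = 1

/-- The action of `γ = (θ, v) ∈ SE(2)` on configurations: `γ·p = (θ x_1 + v, …, θ x_n + v)`. -/
def se2Act {ι : Type*} (θ : Matrix (Fin 2) (Fin 2) ℝ) (v : Pt) (p : Conf ι) : Conf ι :=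
  WithLp.toLp 2 (fun ic : ι × Fin 2 => θ.mulVec (pt p ic.1) ic.2 + v ic.2)

/-- The SE(2)-orbit `O_p` of a configuration `p`. -/
def se2Orbit {ι : Type*} (p : Conf ι) : Set (Conf ι) :=
  {q | ∃ θ v, IsRotation θ ∧ q = se2Act θ v p}

/-- Rotation by 90 degrees. -/
def rotJ : Matrix (Fin 2) (Fin 2) ℝ := !![0, -1; 1, 0]

/-- The infinitesimal rotation of a configuration. -/
def infRot {ι : Type*} (p : Conf ι) : Conf ι := WithLp.toLp 2 (fun ic : ι × Fin 2 => rotJ.mulVec (pt p ic.1) ic.2)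

/-- The infinitesimal translation in coordinate direction `c`. -/
def transl (ι : Type*) (c : Fin 2) : Conf ι := WithLp.toLp 2 (fun ic : ι × Fin 2 => if ic.2 = c then 1 else 0)

/-- The tangent space at `p` of the SE(2)-orbit `O_p`. -/
def orbitTangent {ι : Type*} (p : Conf ι) : Submodule ℝ (Conf ι) :=
  Submodule.span ℝ {infRot p, transl ι 0, transl ι 1}

/-- The Hessian matrix `H_p = ∂²Φ(p)/∂p²`. -/
def hessianMat {ι : Type*} [Fintype ι] [DecidableEq ι] (Φ : Conf ι → ℝ) (p : Conf ι) :
    Matrix (ι × Fin 2) (ι × Fin 2) ℝ :=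
  Matrix.of fun a b =>
    iteratedFDeriv ℝ 2 Φ p ![EuclideanSpace.single a 1, EuclideanSpace.single b 1]

/-- The Hessian of `Φ` at `p` with respect to the coordinates of the vertices in `S`
(for `Φ` depending only on those coordinates this is the Hessian of the induced
function of the positions of the vertices in `S`). -/
def hessianMatOn {ι : Type*} [Fintype ι] [DecidableEq ι] (Φ : Conf ι → ℝ) (p : Conf ι) (S : Set ι) :
    Matrix (↥S × Fin 2) (↥S × Fin 2) ℝ :=
  Matrix.of fun a b => hessianMat Φ p ((a.1 : ι), a.2) ((b.1 : ι), b.2)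

open Classical in
/-- `N₊(A)`: the number of positive eigenvalues of a real symmetric matrix,
counted with multiplicity. -/
def nPos {m : Type*} [Finite m] (A : Matrix m m ℝ) : ℕ :=
  letI := Fintype.ofFinite m
  letI := Classical.decEq m
  if h : A.IsHermitian then Fintype.card {i // 0 < h.eigenvalues i} else 0

open Classical in
/-- `N₋(A)`: the number of negative eigenvalues of a real symmetric matrix,
counted with multiplicity. -/
def nNeg {m : Type*} [Finite m] (A : Matrix m m ℝ) : ℕ :=
  letI := Fintype.ofFinite m
  letI := Classical.decEq m
  if h : A.IsHermitian then Fintype.card {i // h.eigenvalues i < 0} else 0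

open Classical in
/-- `N₀(A)`: the number of zero eigenvalues of a real symmetric matrix,
counted with multiplicity. -/
def nZero {m : Type*} [Finite m] (A : Matrix m m ℝ) : ℕ :=
  letI := Fintype.ofFinite m
  letI := Classical.decEq m
  if h : A.IsHermitian then Fintype.card {i // h.eigenvalues i = 0} else 0

/-- `Φ` is an equivariant Morse function on `P_G`: it has finitely many critical orbits,
and each critical orbit is nondegenerate (the Hessian has exactly three zero eigenvalues). -/
def IsEquivariantMorse {ι : Type*} [Fintype ι] [DecidableEq ι] (G : SimpleGraph ι)
    (Φ : Conf ι → ℝ) : Prop :=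
  {O : Set (Conf ι) | ∃ p ∈ configSpace G, gradient Φ p = 0 ∧ O = se2Orbit p}.Finite ∧
  ∀ p ∈ configSpace G, gradient Φ p = 0 → nZero (hessianMat Φ p) = 3

/-- `i`, `j`, `k` form a 3-cycle of `G`. -/
def Is3Cycle {ι : Type*} (G : SimpleGraph ι) (i j k : ι) : Prop :=
  G.Adj i j ∧ G.Adj i k ∧ G.Adj j k

/-- A framework `(G, p)` is strongly rigid if every 3-cycle of `G` is embedded by `p`
as a nondegenerate triangle. -/
def StronglyRigid {ι : Type*} (G : SimpleGraph ι) (p : Conf ι) : Prop :=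
  ∀ i j k : ι, Is3Cycle G i j k →
    LinearIndependent ℝ ![pt p j - pt p i, pt p k - pt p i]

/-- The target distances satisfy the strict triangle inequalities associated with `G`. -/
def StrictTriangleIneqs {ι : Type*} (G : SimpleGraph ι) (dbar : ι → ι → ℝ) : Prop :=
  ∀ i j k : ι, Is3Cycle G i j k →
    dbar j k < dbar i j + dbar i k ∧ dbar i k < dbar i j + dbar j k ∧
      dbar i j < dbar i k + dbar j k

/-- A triangulated formation system: a formation control system induced by a
triangulated Laman graph, with target distances satisfying the strict triangle
inequalities, monotone attraction/repulsion control laws vanishing at the target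
distances, and whose potential is an equivariant Morse function. -/
structure IsTriFormation {ι : Type*} [Fintype ι] [DecidableEq ι] (G : SimpleGraph ι)
    (f : ι → ι → ℝ → ℝ) (dbar : ι → ι → ℝ) : Prop where
  laman : IsTriangulatedLaman G
  fsymm : ∀ i j, f i j = f j i
  dsymm : ∀ i j, dbar i j = dbar j i
  dpos : ∀ i j, G.Adj i j → 0 < dbar i j
  mono : ∀ i j, G.Adj i j → IsMonoAttRep (f i j)
  fzero : ∀ i j, G.Adj i j → f i j (dbar i j) = 0
  triangle : StrictTriangleIneqs G dbar
  morse : IsEquivariantMorse G (potential G f)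

/-- The (critical) orbit of `p` is exponentially stable: the Hessian of `Φ` at `p` has
exactly three zero eigenvalues and no negative eigenvalues (all the others positive). -/
def ExpStableAt {ι : Type*} [Fintype ι] [DecidableEq ι] (Φ : Conf ι → ℝ) (p : Conf ι) : Prop :=
  nZero (hessianMat Φ p) = 3 ∧ nNeg (hessianMat Φ p) = 0

/-- Generating relation for the independent partition: at each step `l ≥ 2` of the
Henneberg sequence in which the new vertex is aligned with its two parents, the two
new edges are related to the parent edge. -/
def triGen {ι : Type*} {G : SimpleGraph ι} (H : Henneberg G) (p : Conf ι) :
    Sym2 ι → Sym2 ι → Prop := fun e e' =>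
  ∃ l : Fin (Nat.card ι), 2 ≤ (l : ℕ) ∧
    Collinear ℝ {pt p (H.ord (H.par1 l)), pt p (H.ord (H.par2 l)), pt p (H.ord l)} ∧
    e' = s(H.ord (H.par1 l), H.ord (H.par2 l)) ∧
    (e = s(H.ord (H.par1 l), H.ord l) ∨ e = s(H.ord (H.par2 l), H.ord l))

/-- The independent partition of the edge set of `G` for the framework `(G, p)`,
computed along the Henneberg sequence `H`. -/
def indepPartition {ι : Type*} {G : SimpleGraph ι} (H : Henneberg G) (p : Conf ι) :
    Set (Set (Sym2 ι)) :=
  {C | ∃ e ∈ G.edgeSet, C = {e' | e' ∈ G.edgeSet ∧ Relation.EqvGen (triGen H p) e e'}}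

/-- The set `V_i` of vertices incident to the edges in a class `C`. -/
def classVerts {ι : Type*} (C : Set (Sym2 ι)) : Set ι := {v | ∃ e ∈ C, v ∈ e}

end




section Aux

open Relation

variable {ι : Type*}

/-- Intrinsic generator for the independent partition: two edges of a collinear
3-cycle of `G` are related. -/
def myGen (G : SimpleGraph ι) (p : Conf ι) : Sym2 ι → Sym2 ι → Prop := fun e e' =>
  ∃ i j k : ι, Is3Cycle G i j k ∧ Collinear ℝ {pt p i, pt p j, pt p k} ∧
    (e = s(i, j) ∨ e = s(i, k) ∨ e = s(j, k)) ∧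
    (e' = s(i, j) ∨ e' = s(i, k) ∨ e' = s(j, k))

lemma pairRel {α : Type*} {r : α → α → Prop} {x y z : α} (h1 : r x z) (h2 : r y z)
    {a b : α} (ha : a = x ∨ a = y ∨ a = z) (hb : b = x ∨ b = y ∨ b = z) :
    Relation.EqvGen r a b := by
  have eqv := Relation.EqvGen.is_equivalence r
  have hx : EqvGen r x z := EqvGen.rel _ _ h1
  have hy : EqvGen r y z := EqvGen.rel _ _ h2
  rcases ha with rfl | rfl | rfl <;> rcases hb with rfl | rfl | rfl
  · exact eqv.refl _
  · exact eqv.trans hx (eqv.symm hy)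
  · exact hx
  · exact eqv.trans hy (eqv.symm hx)
  · exact eqv.refl _
  · exact hy
  · exact eqv.symm hx
  · exact eqv.symm hy
  · exact eqv.refl _

/-- In a Henneberg sequence, if `x` is adjacent to `k` and appears strictly earlier,
then `x` is one of the two parents of `k`. -/
lemma parent_id {G : SimpleGraph ι} (H : Henneberg G) {x k : ι}
    (hadj : G.Adj x k) (hlt : H.ord.symm x < H.ord.symm k)
    (hl2 : 2 ≤ ((H.ord.symm k : Fin (Nat.card ι)) : ℕ)) :
    x = H.ord (H.par1 (H.ord.symm k)) ∨ x = H.ord (H.par2 (H.ord.symm k)) := by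
  rcases (H.edge_iff x k).1 hadj with h0 | ⟨l', hl', h⟩
  · rcases Sym2.eq_iff.1 h0 with ⟨hx, hk⟩ | ⟨hx, hk⟩
    · exfalso
      have hv : ((H.ord.symm k : Fin (Nat.card ι)) : ℕ) = 1 := by
        rw [hk, Equiv.symm_apply_apply]
      omega
    · exfalso
      have hv : ((H.ord.symm k : Fin (Nat.card ι)) : ℕ) = 0 := by
        rw [hk, Equiv.symm_apply_apply]
      omega
  · rcases h with h | h <;> rcases Sym2.eq_iff.1 h with ⟨hx, hk⟩ | ⟨hx, hk⟩
    · have hk' : H.ord.symm k = l' := by rw [hk, Equiv.symm_apply_apply]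
      left; rw [hk']; exact hx
    · exfalso
      have h1 : H.ord.symm x = l' := by rw [hx, Equiv.symm_apply_apply]
      have h2 : H.ord.symm k = H.par1 l' := by rw [hk, Equiv.symm_apply_apply]
      rw [h1, h2] at hlt
      exact absurd hlt (not_lt.2 (le_of_lt (H.par1_lt l' hl')))
    · have hk' : H.ord.symm k = l' := by rw [hk, Equiv.symm_apply_apply]
      right; rw [hk']; exact hx
    · exfalso
      have h1 : H.ord.symm x = l' := by rw [hx, Equiv.symm_apply_apply]
      have h2 : H.ord.symm k = H.par2 l' := by rw [hk, Equiv.symm_apply_apply]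
      rw [h1, h2] at hlt
      exact absurd hlt (not_lt.2 (le_of_lt (H.par2_lt l' hl')))

/-- Key step: a 3-cycle whose latest vertex (in the Henneberg order) is `k` is a
Henneberg step, so if it is collinear the two `k`-edges are `triGen`-related to the
base edge. -/
lemma keyStep {G : SimpleGraph ι} (H : Henneberg G) (p : Conf ι) {i j k : ι}
    (h3 : Is3Cycle G i j k)
    (hik : H.ord.symm i < H.ord.symm k) (hjk : H.ord.symm j < H.ord.symm k)
    (hcol : Collinear ℝ {pt p i, pt p j, pt p k}) :
    triGen H p s(i, k) s(i, j) ∧ triGen H p s(j, k) s(i, j) := by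
  obtain ⟨hij, hikadj, hjkadj⟩ := h3
  have hordl : H.ord (H.ord.symm k) = k := H.ord.apply_symm_apply k
  have hijne : i ≠ j := hij.ne
  have hne : H.ord.symm i ≠ H.ord.symm j := fun h => hijne (H.ord.symm.injective h)
  have hl2 : 2 ≤ ((H.ord.symm k : Fin (Nat.card ι)) : ℕ) := by
    have a1 : ((H.ord.symm i : Fin (Nat.card ι)) : ℕ) < (H.ord.symm k : Fin (Nat.card ι)) := hik
    have a2 : ((H.ord.symm j : Fin (Nat.card ι)) : ℕ) < (H.ord.symm k : Fin (Nat.card ι)) := hjk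
    have a3 : ((H.ord.symm i : Fin (Nat.card ι)) : ℕ) ≠ (H.ord.symm j : Fin (Nat.card ι)) :=
      fun h => hne (Fin.ext h)
    omega
  have hi := parent_id H hikadj hik hl2
  have hj := parent_id H hjkadj hjk hl2
  have hcol' : Collinear ℝ ({pt p j, pt p i, pt p k} : Set Pt) := by
    rw [Set.insert_comm]; exact hcol
  rcases hi with hi | hi <;> rcases hj with hj | hj
  · exact absurd (hi.trans hj.symm) hijne
  · constructor
    · refine ⟨H.ord.symm k, hl2, ?_, ?_, Or.inl ?_⟩ <;>
        simp only [← hi, ← hj, hordl] <;>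
        first | exact hcol | exact hcol' | rfl | exact Sym2.eq_swap
    · refine ⟨H.ord.symm k, hl2, ?_, ?_, Or.inr ?_⟩ <;>
        simp only [← hi, ← hj, hordl] <;>
        first | exact hcol | exact hcol' | rfl | exact Sym2.eq_swap
  · constructor
    · refine ⟨H.ord.symm k, hl2, ?_, ?_, Or.inr ?_⟩ <;>
        simp only [← hi, ← hj, hordl] <;>
        first | exact hcol | exact hcol' | rfl | exact Sym2.eq_swap
    · refine ⟨H.ord.symm k, hl2, ?_, ?_, Or.inl ?_⟩ <;>
        simp only [← hi, ← hj, hordl] <;>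
        first | exact hcol | exact hcol' | rfl | exact Sym2.eq_swap
  · exact absurd (hi.trans hj.symm) hijne

/-- Any two edges of a collinear 3-cycle are related by `EqvGen (triGen H p)`. -/
lemma allEdges {G : SimpleGraph ι} (H : Henneberg G) (p : Conf ι) {i j k : ι}
    (h3 : Is3Cycle G i j k) (hcol : Collinear ℝ {pt p i, pt p j, pt p k})
    {e e' : Sym2 ι}
    (he : e = s(i, j) ∨ e = s(i, k) ∨ e = s(j, k))
    (he' : e' = s(i, j) ∨ e' = s(i, k) ∨ e' = s(j, k)) :
    Relation.EqvGen (triGen H p) e e' := by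
  obtain ⟨hij, hik, hjk⟩ := h3
  have d1 : H.ord.symm i ≠ H.ord.symm j := fun h => hij.ne (H.ord.symm.injective h)
  have d2 : H.ord.symm i ≠ H.ord.symm k := fun h => hik.ne (H.ord.symm.injective h)
  have d3 : H.ord.symm j ≠ H.ord.symm k := fun h => hjk.ne (H.ord.symm.injective h)
  have hmax : (H.ord.symm i < H.ord.symm k ∧ H.ord.symm j < H.ord.symm k) ∨
      (H.ord.symm i < H.ord.symm j ∧ H.ord.symm k < H.ord.symm j) ∨
      (H.ord.symm j < H.ord.symm i ∧ H.ord.symm k < H.ord.symm i) := by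
    omega
  rcases hmax with ⟨h1, h2⟩ | ⟨h1, h2⟩ | ⟨h1, h2⟩
  · obtain ⟨r1, r2⟩ := keyStep H p ⟨hij, hik, hjk⟩ h1 h2 hcol
    exact pairRel r1 r2 (by tauto) (by tauto)
  · have hcol' : Collinear ℝ ({pt p i, pt p k, pt p j} : Set Pt) := by
      rw [show ({pt p i, pt p k, pt p j} : Set Pt) = {pt p i, pt p j, pt p k} from by
        ext x; simp only [Set.mem_insert_iff, Set.mem_singleton_iff]; tauto]
      exact hcol
    obtain ⟨r1, r2⟩ := keyStep H p ⟨hik, hij, hjk.symm⟩ h1 h2 hcol'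
    rw [show s(k, j) = s(j, k) from Sym2.eq_swap] at r2
    exact pairRel r1 r2 (by tauto) (by tauto)
  · have hcol' : Collinear ℝ ({pt p j, pt p k, pt p i} : Set Pt) := by
      rw [show ({pt p j, pt p k, pt p i} : Set Pt) = {pt p i, pt p j, pt p k} from by
        ext x; simp only [Set.mem_insert_iff, Set.mem_singleton_iff]; tauto]
      exact hcol
    obtain ⟨r1, r2⟩ := keyStep H p ⟨hjk, hij.symm, hik.symm⟩ h1 h2 hcol'
    rw [show s(j, i) = s(i, j) from Sym2.eq_swap] at r1
    rw [show s(k, i) = s(i, k) from Sym2.eq_swap] at r2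
    exact pairRel r1 r2 (by tauto) (by tauto)

lemma triGen_le_myGen {G : SimpleGraph ι} (H : Henneberg G) (p : Conf ι) :
    ∀ e e', triGen H p e e' → myGen G p e e' := by
  rintro e e' ⟨l, hl2, hcol, he', he⟩
  refine ⟨H.ord (H.par1 l), H.ord (H.par2 l), H.ord l,
    ⟨H.par_adj l hl2, ?_, ?_⟩, hcol, Or.inr he, Or.inl he'⟩
  · exact (H.edge_iff _ _).2 (Or.inr ⟨l, hl2, Or.inl rfl⟩)
  · exact (H.edge_iff _ _).2 (Or.inr ⟨l, hl2, Or.inr rfl⟩)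

lemma myGen_le_eqvGen {G : SimpleGraph ι} (H : Henneberg G) (p : Conf ι) :
    ∀ e e', myGen G p e e' → Relation.EqvGen (triGen H p) e e' := by
  rintro e e' ⟨i, j, k, h3, hcol, he, he'⟩
  exact allEdges H p h3 hcol he he'

lemma eqvGen_indep {G : SimpleGraph ι} (H1 H2 : Henneberg G) (p : Conf ι) :
    ∀ e e', Relation.EqvGen (triGen H1 p) e e' → Relation.EqvGen (triGen H2 p) e e' := by
  intro e e' h
  induction h with
  | rel a b hab => exact myGen_le_eqvGen H2 p a b (triGen_le_myGen H1 p a b hab)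
  | refl a => exact EqvGen.refl a
  | symm a b _ ih => exact EqvGen.symm _ _ ih
  | trans a b c _ _ ih1 ih2 => exact EqvGen.trans _ _ _ ih1 ih2

end Aux

/-- Lemma 3.1 of the paper. For a framework `(G, p)` with `G` a
triangulated Laman graph, the independent partition of the edge set does not depend on
the choice of the Henneberg sequence of `G`. -/
theorem stmt4 {ι : Type*} [Fintype ι] (G : SimpleGraph ι)
    (p : Conf ι) (hp : p ∈ configSpace G) (H1 H2 : Henneberg G) :
    indepPartition H1 p = indepPartition H2 p := by
  have hrel : ∀ e e', Relation.EqvGen (triGen H1 p) e e' ↔ Relation.EqvGen (triGen H2 p) e e' :=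
    fun e e' => ⟨eqvGen_indep H1 H2 p e e', eqvGen_indep H2 H1 p e e'⟩
  unfold indepPartition
  ext C
  simp only [Set.mem_setOf_eq]
  constructor <;> rintro ⟨e, he, rfl⟩ <;> refine ⟨e, he, ?_⟩ <;>
    (ext e'; simp only [Set.mem_setOf_eq, hrel])
end

section
/- Let G = (V,E) and G' = (V',E') be triangulated Laman graphs, each with at least two vertices, such that G' is a subgraph of G. Then there exists a Henneberg sequence {G(l)}_{l=1}^{|V|} of G in which G' is a leading subgraph, i.e., G' = G(|V'|). -/
open scoped BigOperators

/-- The graph `G(k)` appearing at step `k` of a Henneberg sequence: its edges are the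
initial edge together with the edges created at the steps `2 ≤ l < k`. -/
def leadingGraph {ι : Type*} {G : SimpleGraph ι} (H : Henneberg G) (k : ℕ) :
    SimpleGraph ι :=
  SimpleGraph.fromEdgeSet
    {e | (2 ≤ k ∧ e = s(H.ord ⟨0, Nat.lt_of_lt_of_le (by norm_num) H.two_le⟩,
            H.ord ⟨1, Nat.lt_of_lt_of_le (by norm_num) H.two_le⟩)) ∨
      ∃ l : Fin (Nat.card ι), 2 ≤ (l : ℕ) ∧ (l : ℕ) < k ∧
        (e = s(H.ord (H.par1 l), H.ord l) ∨ e = s(H.ord (H.par2 l), H.ord l))}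

section ShellingInfra

open Classical

variable {ι : Type*}

/-- Reversed shelling lists: the head is the most recently added vertex. -/
inductive RShell (G : SimpleGraph ι) : List ι → Prop
  | base {a b : ι} : G.Adj a b → RShell G [b, a]
  | cons {xs : List ι} {v a b : ι} : RShell G xs → v ∉ xs → a ∈ xs → b ∈ xs → a ≠ b →
      G.Adj a v → G.Adj b v → G.Adj a b →
      (∀ w ∈ xs, G.Adj w v → w = a ∨ w = b) → RShell G (v :: xs)

variable {G : SimpleGraph ι}

lemma RShell.two_le {L : List ι} (h : RShell G L) : 2 ≤ L.length := by
  induction h with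
  | base => simp
  | cons _ _ _ _ _ _ _ _ _ ih => simpa using Nat.le_succ_of_le ih

lemma RShell.nodup {L : List ι} (h : RShell G L) : L.Nodup := by
  induction h with
  | base hab => simp [G.ne_of_adj hab |>.symm, (G.ne_of_adj hab)]
  | cons _ hv _ _ _ _ _ _ _ ih => exact List.nodup_cons.2 ⟨hv, ih⟩

lemma RShell.suffix {L : List ι} (h : RShell G L) :
    ∀ ys zs : List ι, L = ys ++ zs → 2 ≤ zs.length → RShell G zs := by
  induction h with
  | @base a b hab =>
    intro ys zs hL hlen
    have : ys = [] := by
      rcases ys with _ | ⟨y, ys⟩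
      · rfl
      · exfalso
        have := congrArg List.length hL
        simp at this hlen
        omega
    subst this
    simp only [List.nil_append] at hL
    exact hL ▸ RShell.base hab
  | @cons xs v a b hxs hv ha hb hne hav hbv hab hex ih =>
    intro ys zs hL hlen
    rcases ys with _ | ⟨y, ys⟩
    · simp at hL
      exact hL ▸ RShell.cons hxs hv ha hb hne hav hbv hab hex
    · simp at hL
      exact ih ys zs hL.2 hlen

lemma RShell.cons_elim {v : ι} {xs : List ι} (h : RShell G (v :: xs)) (hlen : xs.length ≠ 1) :
    v ∉ xs ∧ ∃ a b, a ∈ xs ∧ b ∈ xs ∧ a ≠ b ∧ G.Adj a v ∧ G.Adj b v ∧ G.Adj a b ∧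
      (∀ w ∈ xs, G.Adj w v → w = a ∨ w = b) := by
  cases h with
  | base hab => simp at hlen
  | cons hxs hv ha hb hne hav hbv hab hex =>
    exact ⟨hv, _, _, ha, hb, hne, hav, hbv, hab, hex⟩

variable [Fintype ι]

/-- The number of edges of `G` inside the vertex set `T`. -/
noncomputable def ewCount (G : SimpleGraph ι) (T : Finset ι) : ℕ :=
  (G.edgeFinset.filter fun e => ∀ x ∈ e, x ∈ T).card

lemma ewCount_le_one (G : SimpleGraph ι) (a b : ι) : ewCount G {a, b} ≤ 1 := by
  have : (G.edgeFinset.filter fun e => ∀ x ∈ e, x ∈ ({a, b} : Finset ι)) ⊆ {s(a, b)} := by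
    intro e he
    simp only [Finset.mem_filter, SimpleGraph.mem_edgeFinset] at he
    induction e with
    | h x y =>
      have hx := he.2 x (by simp)
      have hy := he.2 y (by simp)
      have hxy : x ≠ y := by
        rintro rfl
        exact (SimpleGraph.irrefl G) ((SimpleGraph.mem_edgeSet G).mp he.1)
      simp only [Finset.mem_insert, Finset.mem_singleton] at hx hy
      simp only [Finset.mem_singleton, Sym2.eq_iff]
      rcases hx with rfl | rfl <;> rcases hy with rfl | rfl <;> tauto
  calc ewCount G {a, b} ≤ ({s(a, b)} : Finset (Sym2 ι)).card := Finset.card_le_card this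
  _ = 1 := by simp

lemma ewCount_pair (hab : G.Adj a b) : ewCount G {a, b} = 1 := by
  refine le_antisymm (ewCount_le_one G a b) ?_
  have : s(a, b) ∈ G.edgeFinset.filter fun e => ∀ x ∈ e, x ∈ ({a, b} : Finset ι) := by
    simp only [Finset.mem_filter, SimpleGraph.mem_edgeFinset]
    refine ⟨hab, ?_⟩
    intro x hx
    rw [Sym2.mem_iff] at hx
    rcases hx with rfl | rfl <;> simp
  exact Finset.card_pos.2 ⟨_, this⟩

lemma adj_of_ewCount_pair {v w : ι} (h : 1 ≤ ewCount G {v, w}) : G.Adj v w := by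
  obtain ⟨e, he⟩ := Finset.card_pos.1 h
  simp only [Finset.mem_filter, SimpleGraph.mem_edgeFinset] at he
  induction e with
  | h x y =>
    have hx := he.2 x (by simp)
    have hy := he.2 y (by simp)
    have hadj : G.Adj x y := (SimpleGraph.mem_edgeSet G).mp he.1
    have hxy : x ≠ y := G.ne_of_adj hadj
    simp only [Finset.mem_insert, Finset.mem_singleton] at hx hy
    rcases hx with rfl | rfl <;> rcases hy with rfl | rfl
    · exact absurd rfl hxy
    · exact hadj
    · exact hadj.symm
    · exact absurd rfl hxy

lemma ewCount_insert (G : SimpleGraph ι) {T : Finset ι} {v : ι} (hv : v ∉ T) :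
    ewCount G (insert v T) = ewCount G T + (T.filter fun w => G.Adj w v).card := by
  classical
  set A := G.edgeFinset.filter fun e => ∀ x ∈ e, x ∈ insert v T with hA
  have hsplit := Finset.card_filter_add_card_filter_not (s := A)
    (p := fun e => v ∈ e)
  have h1 : A.filter (fun e => ¬ v ∈ e) =
      G.edgeFinset.filter fun e => ∀ x ∈ e, x ∈ T := by
    rw [hA, Finset.filter_filter]
    apply Finset.filter_congr
    intro e he
    constructor
    · rintro ⟨hin, hnv⟩ x hx
      rcases Finset.mem_insert.1 (hin x hx) with rfl | h
      · exact absurd hx hnv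
      · exact h
    · intro hin
      exact ⟨fun x hx => Finset.mem_insert_of_mem (hin x hx),
        fun hc => hv (hin v hc)⟩
  have h2 : (A.filter (fun e => v ∈ e)).card = (T.filter fun w => G.Adj w v).card := by
    symm
    apply Finset.card_bij (fun w _ => s(w, v))
    · intro w hw
      simp only [Finset.mem_filter] at hw
      simp only [hA, Finset.mem_filter, SimpleGraph.mem_edgeFinset]
      refine ⟨⟨hw.2, ?_⟩, by simp⟩
      intro x hx
      rw [Sym2.mem_iff] at hx
      rcases hx with rfl | rfl
      · exact Finset.mem_insert_of_mem hw.1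
      · exact Finset.mem_insert_self _ T
    · intro w hw w' hw' hww'
      exact Sym2.congr_left.1 hww'
    · intro e he
      simp only [hA, Finset.mem_filter, SimpleGraph.mem_edgeFinset] at he
      obtain ⟨⟨hadj, hin⟩, hvin⟩ := he
      induction e with
      | h x y =>
        have hxy : G.Adj x y := (SimpleGraph.mem_edgeSet G).mp hadj
        rw [Sym2.mem_iff] at hvin
        rcases hvin with rfl | rfl
        · refine ⟨y, ?_, Sym2.eq_swap⟩
          have hy : y ∈ insert v T := hin y (by simp)
          have : y ≠ v := fun h => (G.ne_of_adj hxy) h.symm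
          simp only [Finset.mem_filter]
          exact ⟨(Finset.mem_insert.1 hy).resolve_left this, hxy.symm⟩
        · refine ⟨x, ?_, rfl⟩
          have hx : x ∈ insert v T := hin x (by simp)
          have : x ≠ v := G.ne_of_adj hxy
          simp only [Finset.mem_filter]
          exact ⟨(Finset.mem_insert.1 hx).resolve_left this, hxy⟩
  calc ewCount G (insert v T) = A.card := rfl
  _ = (A.filter (fun e => v ∈ e)).card + (A.filter (fun e => ¬ v ∈ e)).card := by
      omega
  _ = ewCount G T + (T.filter fun w => G.Adj w v).card := by
      rw [h1, h2, ewCount]; omega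

lemma RShell.ewCount_toFinset {L : List ι} (h : RShell G L) :
    ewCount G L.toFinset = 2 * L.toFinset.card - 3 := by
  induction h with
  | @base a b hab =>
    have hne : b ≠ a := (G.ne_of_adj hab).symm
    have hset : ([b, a] : List ι).toFinset = {b, a} := by simp
    rw [hset, ewCount_pair hab.symm, Finset.card_insert_of_notMem (by simp [hne]),
      Finset.card_singleton]
  | @cons xs v a b hxs hv ha hb hne hav hbv hab hex ih =>
    have hvset : v ∉ xs.toFinset := by simpa using hv
    have hT : (v :: xs).toFinset = insert v xs.toFinset := by simp
    rw [hT, ewCount_insert G hvset]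
    have hfil : xs.toFinset.filter (fun w => G.Adj w v) = {a, b} := by
      ext w
      simp only [Finset.mem_filter, List.mem_toFinset, Finset.mem_insert, Finset.mem_singleton]
      constructor
      · rintro ⟨hw, hadj⟩; exact hex w hw hadj
      · rintro (rfl | rfl)
        exacts [⟨ha, hav⟩, ⟨hb, hbv⟩]
    rw [hfil, Finset.card_insert_of_notMem (by simp [hne]), Finset.card_singleton,
      Finset.card_insert_of_notMem hvset]
    have hsubab : ({a, b} : Finset ι) ⊆ xs.toFinset := by
      intro x hx
      simp only [Finset.mem_insert, Finset.mem_singleton] at hx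
      rcases hx with rfl | rfl
      · exact List.mem_toFinset.2 ha
      · exact List.mem_toFinset.2 hb
    have h2 : 2 ≤ xs.toFinset.card := by
      calc 2 = ({a, b} : Finset ι).card := by
            rw [Finset.card_insert_of_notMem (by simp [hne]), Finset.card_singleton]
      _ ≤ _ := Finset.card_le_card hsubab
    omega

lemma RShell.ewCount_le {L : List ι} (h : RShell G L) :
    ∀ T, T ⊆ L.toFinset → 2 ≤ T.card → ewCount G T ≤ 2 * T.card - 3 := by
  induction h with
  | @base a b hab =>
    intro T hT hcard
    have hba : ([b, a] : List ι).toFinset = {b, a} := by simp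
    have hTeq : T = {b, a} := by
      apply Finset.eq_of_subset_of_card_le (hba ▸ hT)
      exact le_trans (le_trans (Finset.card_insert_le _ _) (by simp)) hcard
    calc ewCount G T = ewCount G {b, a} := by rw [hTeq]
    _ ≤ 1 := ewCount_le_one G b a
    _ ≤ 2 * T.card - 3 := by omega
  | @cons xs v a b hxs hv ha hb hne hav hbv hab hex ih =>
    intro T hT hcard
    have hvset : v ∉ xs.toFinset := by simpa using hv
    by_cases hvT : v ∈ T
    · have hT' : T.erase v ⊆ xs.toFinset := by
        intro x hx
        have hx1 := hT (Finset.mem_of_mem_erase hx)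
        have hx2 := Finset.ne_of_mem_erase hx
        simp only [List.toFinset_cons, Finset.mem_insert] at hx1
        rcases hx1 with rfl | hx1
        · exact absurd rfl hx2
        · exact hx1
      have hsplit : ewCount G T =
          ewCount G (T.erase v) + ((T.erase v).filter fun w => G.Adj w v).card := by
        conv_lhs => rw [← Finset.insert_erase hvT]
        exact ewCount_insert G (Finset.notMem_erase v T)
      have hdle : ((T.erase v).filter fun w => G.Adj w v).card ≤ 2 := by
        have hsub2 : (T.erase v).filter (fun w => G.Adj w v) ⊆ {a, b} := by
          intro w hw
          simp only [Finset.mem_filter] at hw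
          have hwxs : w ∈ xs := List.mem_toFinset.1 (hT' hw.1)
          have := hex w hwxs hw.2
          simp only [Finset.mem_insert, Finset.mem_singleton]
          exact this
        calc _ ≤ ({a, b} : Finset ι).card := Finset.card_le_card hsub2
        _ ≤ 2 := by apply le_trans (Finset.card_insert_le _ _); simp
      have hce := Finset.card_erase_of_mem hvT
      rcases Nat.lt_or_ge (T.erase v).card 2 with hc | hc
      · have hTc : T.card = 2 := by omega
        obtain ⟨x, y, hxy, hTeq⟩ := Finset.card_eq_two.1 hTc
        calc ewCount G T = ewCount G {x, y} := by rw [hTeq]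
        _ ≤ 1 := ewCount_le_one G x y
        _ ≤ 2 * T.card - 3 := by omega
      · have := ih (T.erase v) hT' hc
        omega
    · have hsub : T ⊆ xs.toFinset := by
        intro x hx
        have hx1 := hT hx
        simp only [List.toFinset_cons, Finset.mem_insert] at hx1
        rcases hx1 with rfl | hx1
        · exact absurd hx hvT
        · exact hx1
      exact ih T hsub hcard

/-- A finite vertex set admitting a shelling list. -/
def Shellable (G : SimpleGraph ι) (R : Finset ι) : Prop :=
  ∃ L : List ι, RShell G L ∧ L.toFinset = R

/-- `v` is a removable "ear" of `R`: it has exactly two neighbours in `R.erase v`,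
and they are adjacent. -/
def GoodEar (G : SimpleGraph ι) (R : Finset ι) (v : ι) : Prop :=
  ∃ a b, a ∈ R.erase v ∧ b ∈ R.erase v ∧ a ≠ b ∧ G.Adj a v ∧ G.Adj b v ∧ G.Adj a b ∧
    ∀ w ∈ R.erase v, G.Adj w v → w = a ∨ w = b

lemma key_lemma : ∀ N : ℕ, ∀ R : Finset ι, R.card ≤ N → Shellable G R →
    ∀ T, T ⊆ R → 2 ≤ T.card → ewCount G T = 2 * T.card - 3 → T ≠ R →
    ∃ v ∈ R, v ∉ T ∧ Shellable G (R.erase v) ∧ GoodEar G R v := by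
  intro N
  induction N with
  | zero =>
    intro R hRN _ T hTR hTc _ _
    have := Finset.card_le_card hTR
    omega
  | succ N ih =>
    rintro R hRN ⟨L, hL, hLR⟩ T hTR hTc hTew hTne
    cases hL with
    | @base a b hab =>
      exfalso
      apply hTne
      apply Finset.eq_of_subset_of_card_le hTR
      calc R.card = ([b, a] : List ι).toFinset.card := by rw [hLR]
      _ ≤ 2 := by
          simp only [List.toFinset_cons, List.toFinset_nil, insert_empty_eq]
          apply le_trans (Finset.card_insert_le _ _); simp
      _ ≤ T.card := hTc
    | @cons xs v a b hxs hv ha hb hne hav hbv hab hex =>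
      set Rx := xs.toFinset with hRxdef
      have hvRx : v ∉ Rx := by simpa [hRxdef] using hv
      have hR : R = insert v Rx := by rw [← hLR]; simp [hRxdef]
      have hRev : R.erase v = Rx := by rw [hR, Finset.erase_insert hvRx]
      have hvR : v ∈ R := by rw [hR]; exact Finset.mem_insert_self v Rx
      have haRx : a ∈ Rx := List.mem_toFinset.2 ha
      have hbRx : b ∈ Rx := List.mem_toFinset.2 hb
      have hShx : Shellable G Rx := ⟨xs, hxs, rfl⟩
      have hRcard : R.card = Rx.card + 1 := by
        rw [hR, Finset.card_insert_of_notMem hvRx]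
      have hGEv : GoodEar G R v := by
        refine ⟨a, b, ?_, ?_, hne, hav, hbv, hab, ?_⟩
        · rw [hRev]; exact haRx
        · rw [hRev]; exact hbRx
        · intro w hw hadj
          rw [hRev] at hw
          exact hex w (List.mem_toFinset.1 hw) hadj
      by_cases hvT : v ∈ T
      · -- the lift: transferring a result on `Rx` to `R`
        have lift : ∀ u, u ∈ Rx → u ≠ a → u ≠ b → Shellable G (Rx.erase u) →
            GoodEar G Rx u → Shellable G (R.erase u) ∧ GoodEar G R u := by
          rintro u huRx hua hub ⟨M, hM, hMset⟩ ⟨c, d, hc, hd, hcd, hcu, hdu, hcd', hexu⟩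
          have huv : u ≠ v := fun h => hvRx (h ▸ huRx)
          have hReu : R.erase u = insert v (Rx.erase u) := by
            rw [hR, Finset.erase_insert_of_ne huv.symm]
          constructor
          · refine ⟨v :: M, ?_, ?_⟩
            · apply RShell.cons hM
              · intro hvM
                exact hvRx (Finset.mem_of_mem_erase (hMset ▸ List.mem_toFinset.2 hvM))
              · apply List.mem_toFinset.1
                rw [hMset]
                exact Finset.mem_erase.2 ⟨hua.symm, haRx⟩
              · apply List.mem_toFinset.1
                rw [hMset]
                exact Finset.mem_erase.2 ⟨hub.symm, hbRx⟩
              · exact hne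
              · exact hav
              · exact hbv
              · exact hab
              · intro w hw hadj
                have hwRx : w ∈ Rx :=
                  Finset.mem_of_mem_erase (hMset ▸ List.mem_toFinset.2 hw)
                exact hex w (List.mem_toFinset.1 hwRx) hadj
            · rw [List.toFinset_cons, hMset, hReu]
          · refine ⟨c, d, hReu ▸ Finset.mem_insert_of_mem hc,
              hReu ▸ Finset.mem_insert_of_mem hd, hcd, hcu, hdu, hcd', ?_⟩
            intro w hw hadj
            rw [hReu, Finset.mem_insert] at hw
            rcases hw with rfl | hw
            · exfalso
              rcases hex u (List.mem_toFinset.1 huRx) hadj.symm with h | h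
              · exact hua h
              · exact hub h
            · exact hexu w hw hadj
        -- main case analysis
        have hT'sub : T.erase v ⊆ Rx := by
          rw [← hRev]
          exact Finset.erase_subset_erase v hTR
        have hsplit : ewCount G T =
            ewCount G (T.erase v) + ((T.erase v).filter fun w => G.Adj w v).card := by
          conv_lhs => rw [← Finset.insert_erase hvT]
          exact ewCount_insert G (Finset.notMem_erase v T)
        have hce := Finset.card_erase_of_mem hvT
        by_cases hab2 : a ∈ T ∧ b ∈ T
        · -- both neighbours of v in T
          have hav' : a ≠ v := fun h => hvRx (h ▸ haRx)
          have hbv' : b ≠ v := fun h => hvRx (h ▸ hbRx)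
          have haT' : a ∈ T.erase v := Finset.mem_erase.2 ⟨hav', hab2.1⟩
          have hbT' : b ∈ T.erase v := Finset.mem_erase.2 ⟨hbv', hab2.2⟩
          have hfil : (T.erase v).filter (fun w => G.Adj w v) = {a, b} := by
            ext w
            simp only [Finset.mem_filter, Finset.mem_insert, Finset.mem_singleton]
            constructor
            · rintro ⟨hw, hadj⟩
              exact hex w (List.mem_toFinset.1 (hT'sub hw)) hadj
            · rintro (rfl | rfl)
              exacts [⟨haT', hav⟩, ⟨hbT', hbv⟩]
          have hcard2 : ({a, b} : Finset ι).card = 2 := by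
            rw [Finset.card_insert_of_notMem (by simp [hne]), Finset.card_singleton]
          have hT'card : 2 ≤ (T.erase v).card := by
            calc 2 = ({a, b} : Finset ι).card := hcard2.symm
            _ ≤ _ := Finset.card_le_card (by
                intro x hx
                simp only [Finset.mem_insert, Finset.mem_singleton] at hx
                rcases hx with rfl | rfl
                exacts [haT', hbT'])
          have hT'ew : ewCount G (T.erase v) = 2 * (T.erase v).card - 3 := by
            rw [hfil, hcard2] at hsplit
            omega
          have hT'ne : T.erase v ≠ Rx := by
            obtain ⟨u₀, hu₀R, hu₀T⟩ := Finset.exists_of_ssubset (lt_of_le_of_ne hTR hTne)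
            intro hcon
            have hu₀v : u₀ ≠ v := fun h => hu₀T (h ▸ hvT)
            have : u₀ ∈ Rx := by
              rw [hR, Finset.mem_insert] at hu₀R
              tauto
            rw [← hcon, Finset.mem_erase] at this
            exact hu₀T this.2
          obtain ⟨u, huRx, huT', hShu, hGEu⟩ :=
            ih Rx (by omega) hShx (T.erase v) hT'sub hT'card hT'ew hT'ne
          have hua : u ≠ a := fun h => huT' (h ▸ haT')
          have hub : u ≠ b := fun h => huT' (h ▸ hbT')
          obtain ⟨hSh, hGE⟩ := lift u huRx hua hub hShu hGEu
          have huv : u ≠ v := fun h => hvRx (h ▸ huRx)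
          refine ⟨u, by rw [hR]; exact Finset.mem_insert_of_mem huRx, ?_, hSh, hGE⟩
          intro huT
          exact huT' (Finset.mem_erase.2 ⟨huv, huT⟩)
        · rcases Nat.lt_or_ge (T.erase v).card 2 with hc | hc
          · -- |T| = 2, T = {v, w}
            have hTc : T.card = 2 := by omega
            have hT'c : (T.erase v).card = 1 := by omega
            obtain ⟨w, hw⟩ := Finset.card_eq_one.1 hT'c
            have hwT' : w ∈ T.erase v := hw ▸ Finset.mem_singleton_self w
            have hwRx : w ∈ Rx := hT'sub hwT'
            have hwv : w ≠ v := (Finset.mem_erase.1 hwT').1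
            have hTvw : T = insert v {w} := by rw [← Finset.insert_erase hvT, hw]
            have hewvw : ewCount G (insert v {w}) = 1 := by
              rw [← hTvw, hTew, hTc]
            have hadjvw : G.Adj v w := adj_of_ewCount_pair (by rw [hewvw])
            have hwab : w = a ∨ w = b := hex w (List.mem_toFinset.1 hwRx) hadjvw.symm
            rcases Nat.lt_or_ge Rx.card 3 with hRc | hRc
            · -- Rx = {a, b}
              have hRxab : Rx = {a, b} := by
                symm
                apply Finset.eq_of_subset_of_card_le
                · intro x hx
                  simp only [Finset.mem_insert, Finset.mem_singleton] at hx
                  rcases hx with rfl | rfl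
                  exacts [haRx, hbRx]
                · have : 2 ≤ ({a, b} : Finset ι).card := by
                    rw [Finset.card_insert_of_notMem (by simp [hne]), Finset.card_singleton]
                  omega
              -- u := the element of {a,b} other than w
              have main : ∀ p q : ι, p ≠ q → G.Adj p v → G.Adj q v → G.Adj p q →
                  Rx = {p, q} → w = p →
                  ∃ u ∈ R, u ∉ T ∧ Shellable G (R.erase u) ∧ GoodEar G R u := by
                intro p q hpq hpv hqv hpq' hRxpq hwp
                have hqv' : q ≠ v := fun h => hvRx (h ▸ (by rw [hRxpq]; simp : q ∈ Rx))
                have hqR : q ∈ R := by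
                  rw [hR]
                  exact Finset.mem_insert_of_mem (by rw [hRxpq]; simp)
                have hqT : q ∉ T := by
                  rw [hTvw]
                  simp only [Finset.mem_insert, Finset.mem_singleton]
                  rintro (rfl | h)
                  · exact hqv' rfl
                  · rw [hwp] at h
                    exact hpq h.symm
                have hReq : R.erase q = insert v {p} := by
                  rw [hR, hRxpq, Finset.erase_insert_of_ne hqv'.symm]
                  congr 1
                  rw [Finset.pair_comm, Finset.erase_insert (by simp [Ne.symm hpq])]
                have hSh : Shellable G (R.erase q) := by
                  refine ⟨[v, p], RShell.base hpv, ?_⟩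
                  rw [hReq]; simp
                have hGE : GoodEar G R q := by
                  refine ⟨p, v, ?_, ?_, fun h => hvRx (h ▸ (by rw [hRxpq]; simp : p ∈ Rx)),
                    hpq', hqv.symm, hpv, ?_⟩
                  · rw [hReq]; simp
                  · rw [hReq]; simp
                  · intro x hx _
                    rw [hReq, Finset.mem_insert, Finset.mem_singleton] at hx
                    tauto
                exact ⟨q, hqR, hqT, hSh, hGE⟩
              rcases hwab with h | h
              · exact main a b hne hav hbv hab hRxab h
              · exact main b a hne.symm hbv hav hab.symm
                  (by rw [hRxab]; exact Finset.pair_comm a b) h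
            · -- |Rx| ≥ 3 : recurse with {a, b}
              have hcard2 : ({a, b} : Finset ι).card = 2 := by
                rw [Finset.card_insert_of_notMem (by simp [hne]), Finset.card_singleton]
              have habRx : ({a, b} : Finset ι) ⊆ Rx := by
                intro x hx
                simp only [Finset.mem_insert, Finset.mem_singleton] at hx
                rcases hx with rfl | rfl
                exacts [haRx, hbRx]
              have habne : ({a, b} : Finset ι) ≠ Rx := by
                intro h
                rw [← h, hcard2] at hRc
                omega
              have habew : ewCount G {a, b} = 2 * ({a, b} : Finset ι).card - 3 := by
                rw [ewCount_pair hab, hcard2]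
              obtain ⟨u, huRx, huab, hShu, hGEu⟩ :=
                ih Rx (by omega) hShx {a, b} habRx (by rw [hcard2]) habew habne
              simp only [Finset.mem_insert, Finset.mem_singleton] at huab
              push_neg at huab
              obtain ⟨hSh, hGE⟩ := lift u huRx huab.1 huab.2 hShu hGEu
              have huv : u ≠ v := fun h => hvRx (h ▸ huRx)
              refine ⟨u, by rw [hR]; exact Finset.mem_insert_of_mem huRx, ?_, hSh, hGE⟩
              intro huT
              rw [hTvw, Finset.mem_insert, Finset.mem_singleton] at huT
              rcases huT with rfl | rfl
              · exact huv rfl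
              · rcases hwab with h | h
                exacts [huab.1 h, huab.2 h]
          · -- |T.erase v| ≥ 2 : contradiction via the Laman bound
            exfalso
            have hdle1 : ((T.erase v).filter fun w => G.Adj w v).card ≤ 1 := by
              push_neg at hab2
              have hsub1 : ∀ m : ι, (m = a → a ∉ T) → (m = b → b ∉ T) →
                  (T.erase v).filter (fun w => G.Adj w v) ⊆ {m} → True := fun _ _ _ _ => trivial
              by_cases haT : a ∈ T
              · have hbT := hab2 haT
                have : (T.erase v).filter (fun w => G.Adj w v) ⊆ {a} := by
                  intro w hw
                  simp only [Finset.mem_filter] at hw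
                  rcases hex w (List.mem_toFinset.1 (hT'sub hw.1)) hw.2 with rfl | rfl
                  · simp
                  · exact absurd (Finset.mem_of_mem_erase hw.1) hbT
                calc _ ≤ ({a} : Finset ι).card := Finset.card_le_card this
                _ = 1 := Finset.card_singleton a
              · have : (T.erase v).filter (fun w => G.Adj w v) ⊆ {b} := by
                  intro w hw
                  simp only [Finset.mem_filter] at hw
                  rcases hex w (List.mem_toFinset.1 (hT'sub hw.1)) hw.2 with rfl | rfl
                  · exact absurd (Finset.mem_of_mem_erase hw.1) haT
                  · simp
                calc _ ≤ ({b} : Finset ι).card := Finset.card_le_card this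
                _ = 1 := Finset.card_singleton b
            have hbound := hxs.ewCount_le (T.erase v) hT'sub hc
            omega
      · -- v ∉ T : v itself works
        exact ⟨v, hvR, hvT, hRev ▸ hShx, hGEv⟩

lemma rec_lemma : ∀ N : ℕ, ∀ R : Finset ι, R.card ≤ N → Shellable G R →
    ∀ Sl : List ι, RShell G Sl → Sl.toFinset ⊆ R →
    ∃ rest : List ι, RShell G (rest ++ Sl) ∧ (rest ++ Sl).toFinset = R := by
  intro N
  induction N with
  | zero =>
    intro R hRN _ Sl hSl hsub
    exfalso
    have h2 := hSl.two_le
    have : Sl.toFinset.card ≤ R.card := Finset.card_le_card hsub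
    rw [List.toFinset_card_of_nodup hSl.nodup] at this
    omega
  | succ N ih =>
    intro R hRN hSh Sl hSl hsub
    by_cases heq : Sl.toFinset = R
    · exact ⟨[], by simpa using hSl, by simpa using heq⟩
    · have hTcard : 2 ≤ Sl.toFinset.card := by
        rw [List.toFinset_card_of_nodup hSl.nodup]; exact hSl.two_le
      have hTew := hSl.ewCount_toFinset
      obtain ⟨v, hvR, hvT, hShv, c, d, hc, hd, hcd, hc1, hc2, hc3, hexv⟩ :=
        key_lemma R.card R le_rfl hSh Sl.toFinset hsub hTcard hTew heq
      have hcardv : (R.erase v).card ≤ N := by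
        have := Finset.card_erase_of_mem hvR
        have : 1 ≤ R.card := Finset.card_pos.2 ⟨v, hvR⟩
        omega
      obtain ⟨rest', h1, h2⟩ := ih (R.erase v)
        (by rw [Finset.card_erase_of_mem hvR]; omega) hShv Sl hSl
        (fun x hx => Finset.mem_erase.2 ⟨fun h => hvT (h ▸ hx), hsub hx⟩)
      refine ⟨v :: rest', ?_, ?_⟩
      · show RShell G (v :: (rest' ++ Sl))
        apply RShell.cons h1
        · intro hvM
          have : v ∈ R.erase v := h2 ▸ List.mem_toFinset.2 hvM
          exact (Finset.notMem_erase v R) this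
        · exact List.mem_toFinset.1 (h2 ▸ hc)
        · exact List.mem_toFinset.1 (h2 ▸ hd)
        · exact hcd
        · exact hc1
        · exact hc2
        · exact hc3
        · intro w hw hadj
          exact hexv w (h2 ▸ List.mem_toFinset.2 hw) hadj
      · show (v :: (rest' ++ Sl)).toFinset = R
        rw [List.toFinset_cons, h2, Finset.insert_erase hvR]

lemma adj_of_sym2_eq {x y i j : ι} (h : G.Adj x y) (he : s(i, j) = s(x, y)) : G.Adj i j := by
  rw [Sym2.eq_iff] at he
  rcases he with ⟨rfl, rfl⟩ | ⟨rfl, rfl⟩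
  exacts [h, h.symm]

/-- Indexed structure of a shelling: positions count from the start of the
construction, i.e. from the end of the (reversed) list. -/
lemma RShell.struct (d : ι) {M : List ι} (h : RShell G M) :
    G.Adj (M.reverse.getD 0 d) (M.reverse.getD 1 d) ∧
    ∀ l, 2 ≤ l → l < M.length →
      ∃ j1 j2, j1 < l ∧ j2 < l ∧ j1 ≠ j2 ∧
        G.Adj (M.reverse.getD j1 d) (M.reverse.getD l d) ∧
        G.Adj (M.reverse.getD j2 d) (M.reverse.getD l d) ∧
        G.Adj (M.reverse.getD j1 d) (M.reverse.getD j2 d) ∧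
        ∀ j, j < l → G.Adj (M.reverse.getD j d) (M.reverse.getD l d) → j = j1 ∨ j = j2 := by
  induction h with
  | @base a b hab =>
    constructor
    · simpa using hab
    · intro l hl2 hlen
      simp only [List.length_cons, List.length_nil] at hlen
      omega
  | @cons xs v a b hxs hv ha hb hne hav hbv hab hex ih =>
    have hm2 := hxs.two_le
    have hrev : (v :: xs).reverse = xs.reverse ++ [v] := by simp
    have hlenr : xs.reverse.length = xs.length := by simp
    have hfg : ∀ j, j < xs.length → (v :: xs).reverse.getD j d = xs.reverse.getD j d := by
      intro j hj
      rw [hrev, List.getD_append _ _ _ _ (by omega)]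
    have hfv : (v :: xs).reverse.getD xs.length d = v := by
      rw [hrev, List.getD_append_right _ _ _ _ (by omega)]
      simp [hlenr]
    constructor
    · rw [hfg 0 (by omega), hfg 1 (by omega)]
      exact ih.1
    · intro l hl2 hl
      simp only [List.length_cons] at hl
      rcases Nat.lt_or_ge l xs.length with hlm | hlm
      · obtain ⟨j1, j2, hj1, hj2, hjne, ha1, ha2, ha3, hexj⟩ := ih.2 l hl2 hlm
        refine ⟨j1, j2, hj1, hj2, hjne, ?_, ?_, ?_, ?_⟩
        · rw [hfg j1 (by omega), hfg l hlm]; exact ha1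
        · rw [hfg j2 (by omega), hfg l hlm]; exact ha2
        · rw [hfg j1 (by omega), hfg j2 (by omega)]; exact ha3
        · intro j hj hadj
          rw [hfg j (by omega), hfg l hlm] at hadj
          exact hexj j hj hadj
      · have hleq : l = xs.length := by omega
        subst hleq
        have hmema : a ∈ xs.reverse := List.mem_reverse.2 ha
        have hmemb : b ∈ xs.reverse := List.mem_reverse.2 hb
        obtain ⟨j1, hj1lt, hj1⟩ := List.mem_iff_getElem.1 hmema
        obtain ⟨j2, hj2lt, hj2⟩ := List.mem_iff_getElem.1 hmemb
        have hg1 : xs.reverse.getD j1 d = a := by rw [List.getD_eq_getElem _ _ hj1lt, hj1]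
        have hg2 : xs.reverse.getD j2 d = b := by rw [List.getD_eq_getElem _ _ hj2lt, hj2]
        refine ⟨j1, j2, by omega, by omega, ?_, ?_, ?_, ?_, ?_⟩
        · intro hjj
          rw [hjj] at hg1
          exact hne (hg1 ▸ hg2 ▸ rfl)
        · rw [hfg j1 (by omega), hfv, hg1]; exact hav
        · rw [hfg j2 (by omega), hfv, hg2]; exact hbv
        · rw [hfg j1 (by omega), hfg j2 (by omega), hg1, hg2]; exact hab
        · intro j hj hadj
          rw [hfg j (by omega), hfv] at hadj
          have hjlt : j < xs.reverse.length := by omega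
          have hmemj : xs.reverse.getD j d ∈ xs :=
            List.mem_reverse.1 (by rw [List.getD_eq_getElem _ _ hjlt]; exact List.getElem_mem _)
          have hnd := List.nodup_reverse.2 hxs.nodup
          rcases hex _ hmemj hadj with h1 | h1
          · left
            have : xs.reverse[j] = xs.reverse[j1] := by
              rw [← List.getD_eq_getElem _ d hjlt, h1, ← hg1, List.getD_eq_getElem _ _ hj1lt]
            exact (hnd.getElem_inj_iff).1 this
          · right
            have : xs.reverse[j] = xs.reverse[j2] := by
              rw [← List.getD_eq_getElem _ d hjlt, h1, ← hg2, List.getD_eq_getElem _ _ hj2lt]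
            exact (hnd.getElem_inj_iff).1 this

/-- Transfer a shelling along a graph inclusion which is edge-surjective on `S`. -/
lemma RShell.transfer {G G' : SimpleGraph ι} (hsub : G' ≤ G) {S : Finset ι}
    (hBB : ∀ x ∈ S, ∀ y ∈ S, G.Adj x y → G'.Adj x y) :
    ∀ {L : List ι}, RShell G' L → (∀ x ∈ L, x ∈ S) → RShell G L := by
  intro L h
  induction h with
  | base hab => exact fun _ => RShell.base (hsub hab)
  | @cons xs v a b hxs hv ha hb hne hav hbv hab hex ih =>
    intro hmem
    have hmem' : ∀ x ∈ xs, x ∈ S := fun x hx => hmem x (List.mem_cons_of_mem _ hx)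
    refine RShell.cons (ih hmem') hv ha hb hne (hsub hav) (hsub hbv) (hsub hab) ?_
    intro w hw hadj
    exact hex w hw (hBB w (hmem' w hw) v (hmem v List.mem_cons_self) hadj)

/-- Push a shelling of an induced subgraph forward along the subtype inclusion. -/
lemma RShell.map_val {G' : SimpleGraph ι} {S : Set ι} :
    ∀ {L : List ↥S}, RShell (SimpleGraph.induce S G') L →
      RShell G' (L.map (Subtype.val : ↥S → ι)) := by
  intro L h
  induction h with
  | @base a b hab =>
    exact RShell.base (by exact hab)
  | @cons xs v a b hxs hv ha hb hne hav hbv hab hex ih =>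
    refine RShell.cons ih ?_ (List.mem_map_of_mem ha) (List.mem_map_of_mem hb)
      (fun hh => hne (Subtype.coe_injective hh)) (by exact hav) (by exact hbv)
      (by exact hab) ?_
    · intro hvm
      obtain ⟨v', hv', hvv⟩ := List.mem_map.1 hvm
      exact hv ((Subtype.coe_injective hvv) ▸ hv')
    · intro w hw hadj
      obtain ⟨w', hw', rfl⟩ := List.mem_map.1 hw
      have : (SimpleGraph.induce S G').Adj w' v := by exact hadj
      rcases hex w' hw' this with h1 | h1
      · exact Or.inl (congrArg Subtype.val h1)
      · exact Or.inr (congrArg Subtype.val h1)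

/-- Conversion of a Henneberg sequence into a (reversed) shelling list covering
all the vertices. -/
lemma Henneberg.exists_rshell {G : SimpleGraph ι} (H : Henneberg G) :
    ∃ L : List ι, RShell G L ∧ L.toFinset = Finset.univ := by
  classical
  have h2n : 2 ≤ Nat.card ι := H.two_le
  set n := Nat.card ι with hn
  set g : ℕ → ι := fun j => if h : j < n then H.ord ⟨j, h⟩ else H.ord ⟨0, by omega⟩ with hg
  have hgval : ∀ j (h : j < n), g j = H.ord ⟨j, h⟩ := by
    intro j h; simp [hg, dif_pos h]
  have hginj : ∀ i j, i < n → j < n → g i = g j → i = j := by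
    intro i j hi hj hij
    rw [hgval i hi, hgval j hj] at hij
    have := H.ord.injective hij
    exact congrArg Fin.val this
  have hmem : ∀ m x, x ∈ (List.range m).reverse.map g ↔ ∃ j < m, g j = x := by
    intro m x
    simp only [List.mem_map, List.mem_reverse, List.mem_range]
  have hbase : G.Adj (g 0) (g 1) := by
    rw [hgval 0 (by omega), hgval 1 (by omega)]
    exact (H.edge_iff _ _).2 (Or.inl rfl)
  have main : ∀ m, 2 ≤ m → m ≤ n → RShell G ((List.range m).reverse.map g) := by
    intro m hm2
    induction m, hm2 using Nat.le_induction with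
    | base =>
      intro _
      have hr2 : (List.range 2).reverse.map g = [g 1, g 0] := rfl
      rw [hr2]
      exact RShell.base hbase
    | succ m hm2 ih =>
      intro hmn
      have hrange : (List.range (m + 1)).reverse.map g
          = g m :: (List.range m).reverse.map g := by
        rw [List.range_succ]; simp
      rw [hrange]
      have hmlt : m < n := hmn
      set lm : Fin n := ⟨m, hmlt⟩ with hlm
      have hp1lt : ((H.par1 lm : Fin n) : ℕ) < m := H.par1_lt lm hm2
      have hp2lt : ((H.par2 lm : Fin n) : ℕ) < m := H.par2_lt lm hm2
      have hgp1 : g (H.par1 lm : ℕ) = H.ord (H.par1 lm) := by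
        rw [hgval _ (H.par1 lm).isLt]
      have hgp2 : g (H.par2 lm : ℕ) = H.ord (H.par2 lm) := by
        rw [hgval _ (H.par2 lm).isLt]
      have hgm : g m = H.ord lm := by rw [hgval m hmlt]
      apply RShell.cons (ih (by omega))
      · intro hmm
        obtain ⟨j, hj, hjm⟩ := (hmem m (g m)).1 hmm
        have := hginj j m (by omega) hmlt hjm
        omega
      · exact (hmem m _).2 ⟨(H.par1 lm : ℕ), hp1lt, rfl⟩
      · exact (hmem m _).2 ⟨(H.par2 lm : ℕ), hp2lt, rfl⟩
      · rw [hgp1, hgp2]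
        intro hcon
        exact H.par_ne lm hm2 (H.ord.injective hcon)
      · rw [hgp1, hgm]
        exact (H.edge_iff _ _).2 (Or.inr ⟨lm, hm2, Or.inl rfl⟩)
      · rw [hgp2, hgm]
        exact (H.edge_iff _ _).2 (Or.inr ⟨lm, hm2, Or.inr rfl⟩)
      · rw [hgp1, hgp2]
        exact H.par_adj lm hm2
      · intro w hw hadj
        obtain ⟨j, hj, rfl⟩ := (hmem m w).1 hw
        rcases (H.edge_iff _ _).1 hadj with hinit | ⟨l, hl2, hcase⟩
        · exfalso
          rw [Sym2.eq_iff] at hinit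
          rcases hinit with ⟨h1, h2⟩ | ⟨h1, h2⟩
          · have h2' : H.ord lm = H.ord ⟨1, by omega⟩ := by rw [← hgm]; exact h2
            have hm1 : m = 1 := congrArg Fin.val (H.ord.injective h2')
            omega
          · have h2' : H.ord lm = H.ord ⟨0, by omega⟩ := by rw [← hgm]; exact h2
            have hm0 : m = 0 := congrArg Fin.val (H.ord.injective h2')
            omega
        · have later : ∀ p : Fin n, ((p : ℕ) < (l : ℕ)) → g j = H.ord l →
              g m = H.ord p → False := by
            intro p hp h1 h2
            have hj1 : j = (l : ℕ) := by
              apply hginj j (l : ℕ) (by omega) l.isLt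
              rw [hgval _ l.isLt]; exact h1
            have hm1 : m = (p : ℕ) := by
              apply hginj m (p : ℕ) hmlt p.isLt
              rw [hgval _ p.isLt]; exact h2
            omega
          rcases hcase with hc | hc
          · rw [Sym2.eq_iff] at hc
            rcases hc with ⟨h1, h2⟩ | ⟨h1, h2⟩
            · have hml : lm = l := by
                apply H.ord.injective
                rw [← hgm, h2]
              left
              rw [hgp1, hml]
              exact h1
            · exact absurd (later (H.par1 l) (H.par1_lt l hl2) h1 h2) not_false
          · rw [Sym2.eq_iff] at hc
            rcases hc with ⟨h1, h2⟩ | ⟨h1, h2⟩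
            · have hml : lm = l := by
                apply H.ord.injective
                rw [← hgm, h2]
              right
              rw [hgp2, hml]
              exact h1
            · exact absurd (later (H.par2 l) (H.par2_lt l hl2) h1 h2) not_false
  refine ⟨(List.range n).reverse.map g, main n h2n le_rfl, ?_⟩
  ext x
  simp only [List.mem_toFinset, Finset.mem_univ, iff_true]
  rw [hmem]
  refine ⟨(H.ord.symm x : ℕ), (H.ord.symm x).isLt, ?_⟩
  rw [hgval _ (H.ord.symm x).isLt]
  have : (⟨(H.ord.symm x : ℕ), (H.ord.symm x).isLt⟩ : Fin n) = H.ord.symm x := rfl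
  rw [this, Equiv.apply_symm_apply]

end ShellingInfra

lemma length_eq_card_univ {α : Type*} [Fintype α] {inst : DecidableEq α} {l : List α}
    (hnd : l.Nodup) (h : @List.toFinset α inst l = Finset.univ) :
    l.length = Fintype.card α := by
  letI := inst
  rw [← List.toFinset_card_of_nodup hnd, h, Finset.card_univ]

lemma mem_of_toFinset_eq_univ {α : Type*} [Fintype α] {inst : DecidableEq α} {l : List α}
    (h : @List.toFinset α inst l = Finset.univ) (x : α) : x ∈ l := by
  letI := inst
  have hx : x ∈ @List.toFinset α inst l := by rw [h]; exact Finset.mem_univ x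
  exact List.mem_toFinset.1 hx

open Classical in
/-- Lemma 3.5 of the paper. If `G` and `G'` are triangulated Laman
graphs with at least two vertices and `G'` is a subgraph of `G`, then there is a Henneberg
sequence of `G` in which `G'` is a leading subgraph, i.e. `G' = G(|V'|)` where `V'` is the
vertex set (= support) of `G'`. -/
theorem stmt9 {ι : Type*} [Fintype ι] (G G' : SimpleGraph ι)
    (hG : IsTriangulatedLaman G) (hGcard : 2 ≤ Nat.card ι)
    (hsub : G' ≤ G) (hG' : IsTriangulatedLaman (G'.induce G'.support))
    (hG'card : 2 ≤ Nat.card ↥G'.support) :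
    ∃ H : Henneberg G, leadingGraph H (Nat.card ↥G'.support) = G' := by
  have hn2 : 2 ≤ Nat.card ι := hGcard
  set n := Nat.card ι with hn
  obtain ⟨H0⟩ : Nonempty (Henneberg G) := hG.resolve_left (by omega)
  obtain ⟨H'⟩ : Nonempty (Henneberg (G'.induce G'.support)) :=
    hG'.resolve_left (by omega)
  obtain ⟨L0, hL0, hL0univ⟩ := H0.exists_rshell
  obtain ⟨L', hL', hL'univ⟩ := H'.exists_rshell
  set Sl : List ι := L'.map Subtype.val with hSldef
  have hSlG' : RShell G' Sl := RShell.map_val hL'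
  set S : Finset ι := Sl.toFinset with hSdef
  have hSmem : ∀ x : ι, x ∈ S ↔ x ∈ G'.support := by
    intro x
    simp only [hSdef, hSldef, List.mem_toFinset, List.mem_map]
    constructor
    · rintro ⟨y, hy, rfl⟩; exact y.2
    · intro hx
      refine ⟨⟨x, hx⟩, ?_, rfl⟩
      exact mem_of_toFinset_eq_univ hL'univ ⟨x, hx⟩
  have hSlnd : Sl.Nodup := hL'.nodup.map Subtype.coe_injective
  set k := Nat.card ↥G'.support with hk
  have hk2 : 2 ≤ k := hG'card
  have hSllen : Sl.length = k := by
    rw [hSldef, List.length_map, length_eq_card_univ hL'.nodup hL'univ, hk,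
      Nat.card_eq_fintype_card]
  have hScard : S.card = k := by
    rw [hSdef, List.toFinset_card_of_nodup hSlnd, hSllen]
  -- every `G`-edge inside `S` is a `G'`-edge
  have hBB : ∀ x ∈ S, ∀ y ∈ S, G.Adj x y → G'.Adj x y := by
    have hGbound : ewCount G S ≤ 2 * S.card - 3 :=
      hL0.ewCount_le S (by rw [hL0univ]; exact Finset.subset_univ S) (by omega)
    have hG'exact : ewCount G' S = 2 * S.card - 3 := hSlG'.ewCount_toFinset
    have hfsub : (G'.edgeFinset.filter fun e => ∀ x ∈ e, x ∈ S) ⊆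
        (G.edgeFinset.filter fun e => ∀ x ∈ e, x ∈ S) :=
      Finset.filter_subset_filter _ (SimpleGraph.edgeFinset_mono hsub)
    have hfeq : (G.edgeFinset.filter fun e => ∀ x ∈ e, x ∈ S) =
        (G'.edgeFinset.filter fun e => ∀ x ∈ e, x ∈ S) := by
      symm
      apply Finset.eq_of_subset_of_card_le hfsub
      calc (G.edgeFinset.filter fun e => ∀ x ∈ e, x ∈ S).card
          = ewCount G S := rfl
      _ ≤ 2 * S.card - 3 := hGbound
      _ = ewCount G' S := hG'exact.symm
      _ = _ := rfl
    intro x hx y hy hadj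
    have hmem2 : s(x, y) ∈ G.edgeFinset.filter (fun e => ∀ z ∈ e, z ∈ S) := by
      simp only [Finset.mem_filter, SimpleGraph.mem_edgeFinset, SimpleGraph.mem_edgeSet]
      refine ⟨hadj, ?_⟩
      intro z hz
      rcases Sym2.mem_iff.1 hz with rfl | rfl
      exacts [hx, hy]
    rw [hfeq] at hmem2
    simp only [Finset.mem_filter, SimpleGraph.mem_edgeFinset,
      SimpleGraph.mem_edgeSet] at hmem2
    exact hmem2.1
  have hSlG : RShell G Sl :=
    RShell.transfer hsub hBB hSlG' (fun x hx => List.mem_toFinset.2 hx)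
  obtain ⟨rest, hM, hMuniv⟩ := rec_lemma Finset.univ.card Finset.univ le_rfl
    ⟨L0, hL0, hL0univ⟩ Sl hSlG (Finset.subset_univ _)
  set M : List ι := rest ++ Sl with hMdef
  have hMnd : M.Nodup := hM.nodup
  have hlenM : M.length = n := by
    rw [← List.toFinset_card_of_nodup hMnd, hMuniv, Finset.card_univ, hn,
      Nat.card_eq_fintype_card]
  have hnemp : Nonempty ι := by
    have : 0 < Fintype.card ι := by
      rw [← Nat.card_eq_fintype_card]; omega
    exact Fintype.card_pos_iff.1 this
  set d : ι := Classical.arbitrary ι with hd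
  set f : ℕ → ι := fun jj => M.reverse.getD jj d with hf
  have hrevlen : M.reverse.length = n := by rw [List.length_reverse, hlenM]
  obtain ⟨hstruct1, hstruct2⟩ := hM.struct d
  have hfinj : ∀ i' j', i' < n → j' < n → f i' = f j' → i' = j' := by
    intro i' j' hi hj hij
    have hnd := List.nodup_reverse.2 hMnd
    rw [hf] at hij
    simp only at hij
    rw [List.getD_eq_getElem _ _ (by omega), List.getD_eq_getElem _ _ (by omega)] at hij
    exact hnd.getElem_inj_iff.1 hij
  have hbij : Function.Bijective (fun l : Fin n => f (l : ℕ)) := by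
    rw [Fintype.bijective_iff_injective_and_card]
    constructor
    · intro x y hxy
      exact Fin.ext (hfinj _ _ x.isLt y.isLt hxy)
    · simp [hn, Nat.card_eq_fintype_card]
  set ord : Fin n ≃ ι := Equiv.ofBijective _ hbij with hord
  have hex2 : ∀ l : Fin n, ∃ j1 j2 : Fin n, 2 ≤ (l : ℕ) →
      ((j1 : ℕ) < (l : ℕ) ∧ (j2 : ℕ) < (l : ℕ) ∧ j1 ≠ j2 ∧
        G.Adj (f (j1 : ℕ)) (f (l : ℕ)) ∧ G.Adj (f (j2 : ℕ)) (f (l : ℕ)) ∧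
        G.Adj (f (j1 : ℕ)) (f (j2 : ℕ)) ∧
        ∀ jj, jj < (l : ℕ) → G.Adj (f jj) (f (l : ℕ)) → jj = (j1 : ℕ) ∨ jj = (j2 : ℕ)) := by
    intro l
    by_cases h2 : 2 ≤ (l : ℕ)
    · obtain ⟨j1, j2, hj1, hj2, hjne, h1, h2', h3, hexx⟩ :=
        hstruct2 (l : ℕ) h2 (by rw [hlenM]; exact l.isLt)
      refine ⟨⟨j1, by omega⟩, ⟨j2, by omega⟩, fun _ => ⟨hj1, hj2, ?_, h1, h2', h3, hexx⟩⟩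
      intro hcon
      exact hjne (congrArg Fin.val hcon)
    · exact ⟨⟨0, by omega⟩, ⟨0, by omega⟩, fun hcon => absurd hcon h2⟩
  choose par1 par2 hpars using hex2
  have hforward : ∀ li lj : Fin n, (li : ℕ) < (lj : ℕ) → G.Adj (f (li : ℕ)) (f (lj : ℕ)) →
      ((li : ℕ) = 0 ∧ (lj : ℕ) = 1) ∨ (2 ≤ (lj : ℕ) ∧ (li = par1 lj ∨ li = par2 lj)) := by
    intro li lj hlt hadj
    rcases Nat.lt_or_ge (lj : ℕ) 2 with h2 | h2
    · left; omega
    · right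
      refine ⟨h2, ?_⟩
      rcases (hpars lj h2).2.2.2.2.2.2 (li : ℕ) hlt hadj with h | h
      · exact Or.inl (Fin.ext h)
      · exact Or.inr (Fin.ext h)
  have hedge : ∀ i j : ι, G.Adj i j ↔
      (s(i, j) = s(ord ⟨0, by omega⟩, ord ⟨1, by omega⟩) ∨
        ∃ l : Fin n, 2 ≤ (l : ℕ) ∧
          (s(i, j) = s(ord (par1 l), ord l) ∨ s(i, j) = s(ord (par2 l), ord l))) := by
    intro i j
    constructor
    · intro hadj
      have hne' : ord.symm i ≠ ord.symm j := by
        intro h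
        have := congrArg ord h
        rw [Equiv.apply_symm_apply, Equiv.apply_symm_apply] at this
        exact G.ne_of_adj hadj this
      have core : ∀ x y : ι, (ord.symm x : ℕ) < (ord.symm y : ℕ) → G.Adj x y →
          s(x, y) = s(ord ⟨0, by omega⟩, ord ⟨1, by omega⟩) ∨
            ∃ l : Fin n, 2 ≤ (l : ℕ) ∧
              (s(x, y) = s(ord (par1 l), ord l) ∨ s(x, y) = s(ord (par2 l), ord l)) := by
        intro x y hlt hxy
        have hx : ord (ord.symm x) = x := Equiv.apply_symm_apply ord x
        have hy : ord (ord.symm y) = y := Equiv.apply_symm_apply ord y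
        have hadj' : G.Adj (f (ord.symm x : ℕ)) (f (ord.symm y : ℕ)) := by
          rw [show f ((ord.symm x : Fin n) : ℕ) = ord (ord.symm x) from rfl,
            show f ((ord.symm y : Fin n) : ℕ) = ord (ord.symm y) from rfl, hx, hy]
          exact hxy
        rcases hforward _ _ hlt hadj' with ⟨h0, h1⟩ | ⟨h2, hor⟩
        · left
          rw [← hx, ← hy]
          have e0 : ord.symm x = ⟨0, by omega⟩ := Fin.ext h0
          have e1 : ord.symm y = ⟨1, by omega⟩ := Fin.ext h1
          rw [e0, e1]
        · refine Or.inr ⟨ord.symm y, h2, ?_⟩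
          rcases hor with h | h
          · left; rw [← h, hx, hy]
          · right; rw [← h, hx, hy]
      rcases Nat.lt_trichotomy (ord.symm i : ℕ) (ord.symm j : ℕ) with h | h | h
      · exact core i j h hadj
      · exact absurd (Fin.ext h) hne'
      · have hswap : s(i, j) = s(j, i) := Sym2.eq_swap
        rcases core j i h hadj.symm with h' | ⟨l, hl, h'⟩
        · left; rw [hswap]; exact h'
        · exact Or.inr ⟨l, hl, by rw [hswap]; exact h'⟩
    · rintro (h | ⟨l, hl2, h | h⟩)
      · exact adj_of_sym2_eq hstruct1 h
      · exact adj_of_sym2_eq (hpars l hl2).2.2.2.1 h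
      · exact adj_of_sym2_eq (hpars l hl2).2.2.2.2.1 h
  have hfin : ∀ H : Henneberg G, H.ord = ord → H.par1 = par1 → H.par2 = par2 →
      leadingGraph H k = G' := by
    intro H hH1 hH2 hH3
    have hMrev : M.reverse = Sl.reverse ++ rest.reverse := by
      rw [hMdef, List.reverse_append]
    have hSrevlen : Sl.reverse.length = k := by rw [List.length_reverse, hSllen]
    have hlenMsum : M.length = rest.length + Sl.length := by
      rw [hMdef, List.length_append]
    have hkn : k ≤ n := by omega
    have hposS : ∀ jj, jj < n → (f jj ∈ S ↔ jj < k) := by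
      intro jj hjj
      constructor
      · intro hjS
        by_contra hge
        push_neg at hge
        have hfr : f jj = rest.reverse.getD (jj - k) d := by
          show M.reverse.getD jj d = _
          rw [hMrev, List.getD_append_right _ _ _ _ (by omega), hSrevlen]
        have hmemr : f jj ∈ rest := by
          rw [hfr]
          apply List.mem_reverse.1
          rw [List.getD_eq_getElem _ _ (by rw [List.length_reverse]; omega)]
          exact List.getElem_mem _
        have hdisj : rest.Disjoint Sl := by
          intro a ha hb
          exact (List.nodup_append.1 (by rw [← hMdef]; exact hMnd)).2.2 a ha a hb rfl
        exact hdisj hmemr (List.mem_toFinset.1 hjS)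
      · intro hlt
        have hfs : f jj = Sl.reverse.getD jj d := by
          show M.reverse.getD jj d = _
          rw [hMrev, List.getD_append _ _ _ _ (by omega)]
        apply List.mem_toFinset.2
        rw [hfs]
        apply List.mem_reverse.1
        rw [List.getD_eq_getElem _ _ (by omega)]
        exact List.getElem_mem _
    have hb' : G'.Adj (f 0) (f 1) := by
      have h1 := (hSlG'.struct d).1
      have e0 : f 0 = Sl.reverse.getD 0 d := by
        show M.reverse.getD 0 d = _
        rw [hMrev, List.getD_append _ _ _ _ (by omega)]
      have e1 : f 1 = Sl.reverse.getD 1 d := by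
        show M.reverse.getD 1 d = _
        rw [hMrev, List.getD_append _ _ _ _ (by omega)]
      rw [e0, e1]
      exact h1
    ext i j
    simp only [leadingGraph, SimpleGraph.fromEdgeSet_adj, Set.mem_setOf_eq, hH1, hH2, hH3]
    constructor
    · rintro ⟨hcond, hnij⟩
      rcases hcond with ⟨hk2', hinit⟩ | ⟨l, hl2, hlk, hcase⟩
      · exact adj_of_sym2_eq hb' hinit
      · obtain ⟨hj1, hj2, _, ha1, ha2, _, _⟩ := hpars l hl2
        rcases hcase with h | h
        · refine adj_of_sym2_eq (hBB _ ?_ _ ?_ ha1) h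
          · exact (hposS _ (by omega)).2 (by omega)
          · exact (hposS _ (by omega)).2 hlk
        · refine adj_of_sym2_eq (hBB _ ?_ _ ?_ ha2) h
          · exact (hposS _ (by omega)).2 (by omega)
          · exact (hposS _ (by omega)).2 hlk
    · intro hadj
      refine ⟨?_, G'.ne_of_adj hadj⟩
      have hiS : i ∈ S := (hSmem i).2 (SimpleGraph.mem_support G' |>.2 ⟨j, hadj⟩)
      have hjS : j ∈ S := (hSmem j).2 (SimpleGraph.mem_support G' |>.2 ⟨i, hadj.symm⟩)
      have hik : (ord.symm i : ℕ) < k := by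
        apply (hposS _ (ord.symm i).isLt).1
        rw [show f ((ord.symm i : Fin n) : ℕ) = ord (ord.symm i) from rfl,
          Equiv.apply_symm_apply]
        exact hiS
      have hjk : (ord.symm j : ℕ) < k := by
        apply (hposS _ (ord.symm j).isLt).1
        rw [show f ((ord.symm j : Fin n) : ℕ) = ord (ord.symm j) from rfl,
          Equiv.apply_symm_apply]
        exact hjS
      have hne' : ord.symm i ≠ ord.symm j := by
        intro h
        have := congrArg ord h
        rw [Equiv.apply_symm_apply, Equiv.apply_symm_apply] at this
        exact G'.ne_of_adj hadj this
      have core2 : ∀ x y : ι, (ord.symm x : ℕ) < (ord.symm y : ℕ) → (ord.symm y : ℕ) < k →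
          G.Adj x y →
          (2 ≤ k ∧ s(x, y) = s(ord ⟨0, by omega⟩, ord ⟨1, by omega⟩)) ∨
            ∃ l : Fin n, 2 ≤ (l : ℕ) ∧ (l : ℕ) < k ∧
              (s(x, y) = s(ord (par1 l), ord l) ∨ s(x, y) = s(ord (par2 l), ord l)) := by
        intro x y hlt hyk hxy
        have hx : ord (ord.symm x) = x := Equiv.apply_symm_apply ord x
        have hy : ord (ord.symm y) = y := Equiv.apply_symm_apply ord y
        have hadj' : G.Adj (f (ord.symm x : ℕ)) (f (ord.symm y : ℕ)) := by
          rw [show f ((ord.symm x : Fin n) : ℕ) = ord (ord.symm x) from rfl,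
            show f ((ord.symm y : Fin n) : ℕ) = ord (ord.symm y) from rfl, hx, hy]
          exact hxy
        rcases hforward _ _ hlt hadj' with ⟨h0, h1⟩ | ⟨h2, hor⟩
        · left
          refine ⟨hk2, ?_⟩
          rw [← hx, ← hy]
          have e0 : ord.symm x = ⟨0, by omega⟩ := Fin.ext h0
          have e1 : ord.symm y = ⟨1, by omega⟩ := Fin.ext h1
          rw [e0, e1]
        · refine Or.inr ⟨ord.symm y, h2, hyk, ?_⟩
          rcases hor with h | h
          · left; rw [← h, hx, hy]
          · right; rw [← h, hx, hy]
      rcases Nat.lt_trichotomy (ord.symm i : ℕ) (ord.symm j : ℕ) with h | h | h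
      · exact core2 i j h hjk (hsub hadj)
      · exact absurd (Fin.ext h) hne'
      · have hswap : s(i, j) = s(j, i) := Sym2.eq_swap
        rcases core2 j i h hik (hsub hadj.symm) with ⟨hx1, h'⟩ | ⟨l, hl, hlk', h'⟩
        · exact Or.inl ⟨hx1, by rw [hswap]; exact h'⟩
        · exact Or.inr ⟨l, hl, hlk', by rw [hswap]; exact h'⟩
  exact ⟨{ two_le := hn2, ord := ord, par1 := par1, par2 := par2,
           par1_lt := fun l hl => Fin.lt_def.2 (hpars l hl).1,
           par2_lt := fun l hl => Fin.lt_def.2 (hpars l hl).2.1,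
           par_ne := fun l hl => (hpars l hl).2.2.1,
           par_adj := fun l hl => (hpars l hl).2.2.2.2.2.1,
           edge_iff := hedge }, hfin _ rfl rfl rfl⟩
end
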